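/- Let μ be a Borel probability measure on ℝ and let g ∈ L¹(μ) with g ≥ 0. Define the uncentered minimal function g_*(x) = inf { (1/μ(I)) ∫_I g dμ : I an open interval with x ∈ I and μ(I) > 0 }. Then for every λ > 0, ∫_{{x : g_*(x) < λ}} g dμ ≤ 2λ. -/

import Mathlib

open MeasureTheory

open Set in
private theorem three_ordConn {I J K : Set ℝ} (hI : I.OrdConnected) (hJ : J.OrdConnected)
    (hK : K.OrdConnected) {p : ℝ} (hpI : p ∈ I) (hpJ : p ∈ J) (hpK : p ∈ K) :
    I ⊆ J ∪ K ∨ J ⊆ I ∪ K ∨ K ⊆ I ∪ J := by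
  by_contra h
  push_neg at h
  obtain ⟨h1, h2, h3⟩ := h
  obtain ⟨x, hxI, hxJK⟩ := not_subset.mp h1
  obtain ⟨y, hyJ, hyIK⟩ := not_subset.mp h2
  obtain ⟨z, hzK, hzIJ⟩ := not_subset.mp h3
  simp only [mem_union, not_or] at hxJK hyIK hzIJ
  have key : ∀ (A B : Set ℝ), A.OrdConnected → B.OrdConnected → ∀ a b : ℝ,
      a ∈ A → b ∈ B → p ∈ A → p ∈ B → ((a < p ∧ b < p) ∨ (p < a ∧ p < b)) →
      a ∈ B ∨ b ∈ A := by
    intro A B hA hB a b haA hbB hpA hpB hc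
    rcases hc with ⟨h1, h2⟩ | ⟨h1, h2⟩
    · rcases le_total a b with hab | hab
      · exact Or.inr (hA.out haA hpA ⟨hab, h2.le⟩)
      · exact Or.inl (hB.out hbB hpB ⟨hab, h1.le⟩)
    · rcases le_total a b with hab | hab
      · exact Or.inl (hB.out hpB hbB ⟨h1.le, hab⟩)
      · exact Or.inr (hA.out hpA haA ⟨h2.le, hab⟩)
  have hx : x < p ∨ p < x := by
    rcases lt_trichotomy x p with h|h|h
    · exact Or.inl h
    · exact absurd (h ▸ hpJ) hxJK.1
    · exact Or.inr h
  have hy : y < p ∨ p < y := by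
    rcases lt_trichotomy y p with h|h|h
    · exact Or.inl h
    · exact absurd (h ▸ hpI) hyIK.1
    · exact Or.inr h
  have hz : z < p ∨ p < z := by
    rcases lt_trichotomy z p with h|h|h
    · exact Or.inl h
    · exact absurd (h ▸ hpI) hzIJ.1
    · exact Or.inr h
  rcases hx with hx | hx <;> rcases hy with hy | hy <;> rcases hz with hz | hz
  · rcases key I J hI hJ x y hxI hyJ hpI hpJ (Or.inl ⟨hx, hy⟩) with h | h
    · exact hxJK.1 h
    · exact hyIK.1 h
  · rcases key I J hI hJ x y hxI hyJ hpI hpJ (Or.inl ⟨hx, hy⟩) with h | h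
    · exact hxJK.1 h
    · exact hyIK.1 h
  · rcases key I K hI hK x z hxI hzK hpI hpK (Or.inl ⟨hx, hz⟩) with h | h
    · exact hxJK.2 h
    · exact hzIJ.1 h
  · rcases key J K hJ hK y z hyJ hzK hpJ hpK (Or.inr ⟨hy, hz⟩) with h | h
    · exact hyIK.2 h
    · exact hzIJ.2 h
  · rcases key J K hJ hK y z hyJ hzK hpJ hpK (Or.inl ⟨hy, hz⟩) with h | h
    · exact hyIK.2 h
    · exact hzIJ.2 h
  · rcases key I K hI hK x z hxI hzK hpI hpK (Or.inr ⟨hx, hz⟩) with h | h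
    · exact hxJK.2 h
    · exact hzIJ.1 h
  · rcases key I J hI hJ x y hxI hyJ hpI hpJ (Or.inr ⟨hx, hy⟩) with h | h
    · exact hxJK.1 h
    · exact hyIK.1 h
  · rcases key I J hI hJ x y hxI hyJ hpI hpJ (Or.inr ⟨hx, hy⟩) with h | h
    · exact hxJK.1 h
    · exact hyIK.1 h

open Set Classical in
private theorem mult_two_subcover (s : Finset (Set ℝ)) (hs : ∀ I ∈ s, I.OrdConnected) :
    ∃ t ⊆ s, (⋃ I ∈ t, I) = (⋃ I ∈ s, I) ∧
      ∀ p : ℝ, (t.filter (fun I => p ∈ I)).card ≤ 2 := by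
  induction s using Finset.strongInduction with
  | _ s ih =>
    by_cases h : ∃ I ∈ s, I ⊆ ⋃ J ∈ s.erase I, J
    · obtain ⟨I, hIs, hIsub⟩ := h
      obtain ⟨t, hts, hU, hmult⟩ := ih (s.erase I) (Finset.erase_ssubset hIs)
        (fun J hJ => hs J (Finset.mem_of_mem_erase hJ))
      refine ⟨t, hts.trans (Finset.erase_subset _ _), ?_, hmult⟩
      rw [hU]
      apply subset_antisymm
      · exact Set.iUnion₂_subset fun J hJ =>
          Set.subset_iUnion₂ (s := fun J _ => J) J (Finset.mem_of_mem_erase hJ)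
      · intro x hx
        simp only [Set.mem_iUnion] at hx ⊢
        obtain ⟨J, hJ, hxJ⟩ := hx
        by_cases hJI : J = I
        · subst hJI
          have := hIsub hxJ
          simpa using this
        · exact ⟨J, Finset.mem_erase.mpr ⟨hJI, hJ⟩, hxJ⟩
    · push_neg at h
      refine ⟨s, le_refl _, rfl, fun p => ?_⟩
      by_contra hcard
      push_neg at hcard
      obtain ⟨I, J, K, hI, hJ, hK, hIJ, hIK, hJK⟩ :=
        Finset.two_lt_card_iff.mp hcard
      rw [Finset.mem_filter] at hI hJ hK
      have h3 := three_ordConn (hs I hI.1) (hs J hJ.1) (hs K hK.1) hI.2 hJ.2 hK.2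
      have sub2union : ∀ A B C : Set ℝ, A ∈ s → B ∈ s → C ∈ s → A ≠ B → A ≠ C →
          A ⊆ B ∪ C → False := by
        intro A B C hA hB hC hAB hAC hsub
        apply h A hA
        intro x hx
        rcases hsub hx with hx' | hx'
        · exact Set.mem_biUnion (Finset.mem_erase.mpr ⟨hAB.symm, hB⟩) hx'
        · exact Set.mem_biUnion (Finset.mem_erase.mpr ⟨hAC.symm, hC⟩) hx'
      rcases h3 with h3 | h3 | h3
      · exact sub2union I J K hI.1 hJ.1 hK.1 hIJ hIK h3
      · exact sub2union J I K hJ.1 hI.1 hK.1 (Ne.symm hIJ) hJK h3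
      · exact sub2union K I J hK.1 hI.1 hJ.1 (Ne.symm hIK) (Ne.symm hJK) h3

open Set Classical in
private theorem sum_le_two (μ : Measure ℝ) [IsProbabilityMeasure μ] (t : Finset (Set ℝ))
    (hm : ∀ I ∈ t, MeasurableSet I)
    (hmult : ∀ p : ℝ, (t.filter (fun I => p ∈ I)).card ≤ 2) :
    ∑ I ∈ t, μ I ≤ 2 := by
  have h1 : ∀ I ∈ t, μ I = ∫⁻ x, I.indicator (1 : ℝ → ENNReal) x ∂μ := by
    intro I hI
    rw [lintegral_indicator_one (hm I hI)]
  calc ∑ I ∈ t, μ I = ∑ I ∈ t, ∫⁻ x, I.indicator (1 : ℝ → ENNReal) x ∂μ :=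
        Finset.sum_congr rfl h1
    _ = ∫⁻ x, ∑ I ∈ t, I.indicator (1 : ℝ → ENNReal) x ∂μ := by
        rw [lintegral_finset_sum]
        exact fun I hI => measurable_const.indicator (hm I hI)
    _ ≤ ∫⁻ _, 2 ∂μ := by
        apply lintegral_mono
        intro x
        dsimp only
        have : ∑ I ∈ t, I.indicator (1 : ℝ → ENNReal) x
            = ((t.filter (fun I => x ∈ I)).card : ENNReal) := by
          rw [Finset.card_filter]
          push_cast
          apply Finset.sum_congr rfl
          intro I _
          simp [Set.indicator_apply]
        rw [this]
        exact_mod_cast Nat.cast_le.mpr (hmult x) |>.trans_eq (by norm_num)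
    _ = 2 := by simp

open Set Classical in
theorem uncentered_minimal_estimate (μ : Measure ℝ) [IsProbabilityMeasure μ] (g : ℝ → ℝ)
    (hg : Integrable g μ) (hg0 : ∀ x, 0 ≤ g x) (lam : ℝ) (hlam : 0 < lam) :
    ∫ x in {x : ℝ | sInf {r : ENNReal | ∃ I : Set ℝ, IsOpen I ∧ I.OrdConnected ∧ x ∈ I ∧
          0 < μ I ∧ r = ENNReal.ofReal ((μ I).toReal⁻¹ * ∫ y in I, g y ∂μ)}
        < ENNReal.ofReal lam}, g x ∂μ ≤ 2 * lam := by
  set 𝒜 : Set (Set ℝ) := {I | IsOpen I ∧ I.OrdConnected ∧ 0 < μ I ∧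
    ENNReal.ofReal ((μ I).toReal⁻¹ * ∫ y in I, g y ∂μ) < ENNReal.ofReal lam} with h𝒜
  set E : Set ℝ := {x : ℝ | sInf {r : ENNReal | ∃ I : Set ℝ, IsOpen I ∧ I.OrdConnected ∧ x ∈ I ∧
          0 < μ I ∧ r = ENNReal.ofReal ((μ I).toReal⁻¹ * ∫ y in I, g y ∂μ)}
        < ENNReal.ofReal lam} with hE
  have hEeq : E = ⋃ I ∈ 𝒜, I := by
    ext x
    simp only [hE, mem_setOf_eq, sInf_lt_iff, mem_iUnion, h𝒜]
    constructor
    · rintro ⟨r, ⟨I, h1, h2, h3, h4, rfl⟩, hr⟩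
      exact ⟨I, ⟨h1, h2, h4, hr⟩, h3⟩
    · rintro ⟨I, ⟨h1, h2, h4, hr⟩, h3⟩
      exact ⟨_, ⟨I, h1, h2, h3, h4, rfl⟩, hr⟩
  have hEopen : IsOpen E := by
    rw [hEeq]; exact isOpen_biUnion fun I hI => hI.1
  set f : ℝ → ENNReal := fun x => ENNReal.ofReal (g x) with hf
  set ν : Measure ℝ := μ.withDensity f with hν
  have hνfin : ∀ s : Set ℝ, MeasurableSet s → ν s ≠ ⊤ := by
    intro s hs
    rw [hν, withDensity_apply _ hs]
    refine ne_top_of_le_ne_top hg.2.ne ?_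
    calc ∫⁻ x in s, f x ∂μ ≤ ∫⁻ x, f x ∂μ := setLIntegral_le_lintegral s f
      _ ≤ ∫⁻ x, (‖g x‖₊ : ENNReal) ∂μ := by
          apply lintegral_mono
          intro x
          simp only [hf]
          exact (Real.enorm_eq_ofReal (hg0 x)).symm.le
  have hνI : ∀ I ∈ 𝒜, ν I ≤ ENNReal.ofReal lam * μ I := by
    intro I hI
    obtain ⟨hIo, _, hIpos, hIavg⟩ := hI
    have hμItop : μ I ≠ ⊤ := measure_ne_top μ I
    have htoReal : (0:ℝ) < (μ I).toReal := ENNReal.toReal_pos hIpos.ne' hμItop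
    have havg : (μ I).toReal⁻¹ * ∫ y in I, g y ∂μ < lam :=
      (ENNReal.ofReal_lt_ofReal_iff hlam).mp hIavg
    have hint : ∫ y in I, g y ∂μ < lam * (μ I).toReal := by
      have h2 := mul_lt_mul_of_pos_left havg htoReal
      rw [← mul_assoc, mul_inv_cancel₀ htoReal.ne', one_mul] at h2
      linarith [h2]
    have h1 : ν I = ENNReal.ofReal (∫ y in I, g y ∂μ) := by
      rw [hν, withDensity_apply _ hIo.measurableSet, hf,
        ← ofReal_integral_eq_lintegral_ofReal hg.integrableOn
          (Filter.Eventually.of_forall hg0)]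
    rw [h1]
    calc ENNReal.ofReal (∫ y in I, g y ∂μ) ≤ ENNReal.ofReal (lam * (μ I).toReal) :=
          ENNReal.ofReal_le_ofReal hint.le
      _ = ENNReal.ofReal lam * ENNReal.ofReal ((μ I).toReal) := ENNReal.ofReal_mul hlam.le
      _ = ENNReal.ofReal lam * μ I := by rw [ENNReal.ofReal_toReal hμItop]
  have hK : ∀ K : Set ℝ, IsCompact K → K ⊆ E → ν K ≤ ENNReal.ofReal (2 * lam) := by
    intro K hKc hKE
    rw [hEeq] at hKE
    obtain ⟨t, ht⟩ := hKc.elim_finite_subcover (fun I : 𝒜 => (I : Set ℝ))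
      (fun I => I.2.1) (fun x hx => by
        rcases Set.mem_iUnion₂.mp (hKE hx) with ⟨I, hI, h⟩
        exact Set.mem_iUnion.mpr ⟨⟨I, hI⟩, h⟩)
    set s' : Finset (Set ℝ) := t.image Subtype.val with hs'
    have hs'𝒜 : ∀ I ∈ s', I ∈ 𝒜 := by
      intro I hI
      simp only [hs', Finset.mem_image] at hI
      obtain ⟨i, _, rfl⟩ := hI
      exact i.2
    have hs'sub : K ⊆ ⋃ I ∈ s', I := by
      refine ht.trans ?_
      intro x hx
      simp only [Set.mem_iUnion] at hx ⊢
      obtain ⟨i, hi, hxi⟩ := hx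
      exact ⟨i.val, Finset.mem_image_of_mem _ hi, hxi⟩
    obtain ⟨t', ht's, hUeq, hmult⟩ := mult_two_subcover s' (fun I hI => (hs'𝒜 I hI).2.1)
    calc ν K ≤ ν (⋃ I ∈ t', I) := measure_mono (hUeq ▸ hs'sub)
      _ ≤ ∑ I ∈ t', ν I := measure_biUnion_finset_le _ _
      _ ≤ ∑ I ∈ t', ENNReal.ofReal lam * μ I :=
          Finset.sum_le_sum fun I hI => hνI I (hs'𝒜 I (ht's hI))
      _ = ENNReal.ofReal lam * ∑ I ∈ t', μ I := (Finset.mul_sum _ _ _).symm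
      _ ≤ ENNReal.ofReal lam * 2 := by
          refine mul_le_mul_of_nonneg_left (sum_le_two μ t' (fun I hI =>
            ((hs'𝒜 I (ht's hI)).1).measurableSet) hmult) zero_le
      _ = ENNReal.ofReal (2 * lam) := by
          rw [ENNReal.ofReal_mul (by norm_num : (0:ℝ) ≤ 2)]
          rw [mul_comm]
          norm_num
  have hνE : ν E ≤ ENNReal.ofReal (2 * lam) := by
    refine ENNReal.le_of_forall_pos_le_add fun ε hε _ => ?_
    obtain ⟨K, hKE, hKc, hlt⟩ := hEopen.measurableSet.exists_isCompact_lt_add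
      (μ := ν) (hνfin E hEopen.measurableSet) (ENNReal.coe_ne_zero.mpr hε.ne')
    exact (hlt.trans_le (add_le_add_left (hK K hKc hKE) _)).le
  have hint : ∫ x in E, g x ∂μ = (ν E).toReal := by
    rw [integral_eq_lintegral_of_nonneg_ae (Filter.Eventually.of_forall hg0)
      hg.1.restrict, hν, withDensity_apply _ hEopen.measurableSet]
  rw [hint]
  calc (ν E).toReal ≤ (ENNReal.ofReal (2 * lam)).toReal :=
        ENNReal.toReal_mono ENNReal.ofReal_ne_top hνE
    _ = 2 * lam := ENNReal.toReal_ofReal (by linarith)
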